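/- Let P be a poset, 𝓜 a minimal subset selection on P, and τ_𝓜 the topology induced by the 𝓜-convergence structure in P. Then a subset V ⊆ P belongs to τ_𝓜 if and only if both of the following hold: (TM1) V is an upper set; and (TM2) for each A ∈ 𝓜⁺, if sup A ∈ V then there exists a nonempty finite subset B of A such that ub(B) ⊆ V. -/

import Mathlib

universe u

/-- A directed preordered index for a net: `r` is reflexive, transitive,
the index type is nonempty, and `r` is directed. -/
structure IsDirNet {I : Type u} (r : I → I → Prop) : Prop where
  refl : ∀ i, r i i
  trans : ∀ {i j k : I}, r i j → r j k → r i k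
  nonempty : Nonempty I
  directed : ∀ i j, ∃ k, r i k ∧ r j k

/-- A minimal subset selection on a poset `P`. -/
def MinSel {P : Type u} [PartialOrder P] (M : Set (Set P)) : Prop :=
  (∅ : Set P) ∉ M ∧ ∀ x : P, {x} ∈ M

/-- The net `f : I → P` (indexed by `(I, r)`) `𝓜`-converges to `x`. -/
def MConv {P : Type u} [PartialOrder P] (M : Set (Set P))
    {I : Type u} (r : I → I → Prop) (f : I → P) (x : P) : Prop :=
  ∃ A : Set P, ∃ s : P, A ∈ M ∧ IsLUB A s ∧ x ≤ s ∧
    ∀ a ∈ A, ∃ i₀, ∀ i, r i₀ i → a ≤ f i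

/-- The topology `τ_𝓜` induced by `𝓜`-convergence, as a collection of open sets. -/
def mTop {P : Type u} [PartialOrder P] (M : Set (Set P)) : Set (Set P) :=
  {U | ∀ (I : Type u) (r : I → I → Prop) (f : I → P) (x : P),
      IsDirNet r → MConv M r f x → x ∈ U → ∃ i₀, ∀ i, r i₀ i → f i ∈ U}

/-- The `𝓜`-convergence structure is topological: every net converging to `x` with
respect to `τ_𝓜` also `𝓜`-converges to `x`. -/
def MTopological {P : Type u} [PartialOrder P] (M : Set (Set P)) : Prop :=
  ∀ (I : Type u) (r : I → I → Prop) (f : I → P) (x : P), IsDirNet r →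
    (∀ U ∈ mTop M, x ∈ U → ∃ i₀, ∀ i, r i₀ i → f i ∈ U) →
    MConv M r f x

/-- The `𝓜`-way-below relation `x ≪_𝓜 y`. -/
def wayBelowM {P : Type u} [PartialOrder P] (M : Set (Set P)) (x y : P) : Prop :=
  ∀ (A : Set P) (s : P), A ∈ M → IsLUB A s → y ≤ s →
    ∃ B : Set P, B.Nonempty ∧ B.Finite ∧ B ⊆ A ∧ upperBounds B ⊆ Set.Ici x

/-- `𝓜`-continuity of the poset `P`. -/
def MCont {P : Type u} [PartialOrder P] (M : Set (Set P)) : Prop :=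
  ∀ x : P,
    (∃ A : Set P, ∃ s : P, A ∈ M ∧ IsLUB A s ∧ A ⊆ {y | wayBelowM M y x} ∧ x ≤ s) ∧
    {y | wayBelowM M x y} ∈ mTop M

lemma dir_finite {I : Type u} {r : I → I → Prop} (h : IsDirNet r)
    {α : Type*} {B : Set α} (hB : B.Finite) (p : α → I → Prop)
    (H : ∀ b ∈ B, ∃ i, ∀ j, r i j → p b j) :
    ∃ i, ∀ j, r i j → ∀ b ∈ B, p b j := by
  revert H
  refine Set.Finite.induction_on B hB ?_ ?_
  · intro _
    obtain ⟨i⟩ := h.nonempty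
    exact ⟨i, fun j _ b hb => hb.elim⟩
  · intro a B' ha hB' ih H
    obtain ⟨i₁, hi₁⟩ := H a (Set.mem_insert _ _)
    obtain ⟨i₂, hi₂⟩ := ih (fun b hb => H b (Set.mem_insert_of_mem _ hb))
    obtain ⟨k, hk1, hk2⟩ := h.directed i₁ i₂
    refine ⟨k, fun j hj b hb => ?_⟩
    rcases hb with rfl | hb
    · exact hi₁ j (h.trans hk1 hj)
    · exact hi₂ j (h.trans hk2 hj) b hb

/-- Order-theoretic characterisation of the opens of `τ_𝓜`. -/
theorem stmt_1 {P : Type u} [PartialOrder P] (M : Set (Set P)) (hM : MinSel M)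
    (V : Set P) :
    V ∈ mTop M ↔
      (IsUpperSet V ∧
        ∀ (A : Set P) (s : P), A ∈ M → IsLUB A s → s ∈ V →
          ∃ B : Set P, B.Nonempty ∧ B.Finite ∧ B ⊆ A ∧ upperBounds B ⊆ V) := by
  constructor
  · intro hV
    constructor
    · intro x y hxy hx
      have hconv : MConv M (fun _ _ : PUnit.{u+1} => True) (fun _ => y) x :=
        ⟨{x}, x, hM.2 x, isLUB_singleton, le_rfl,
          fun a ha => ⟨PUnit.unit, fun i _ => by
            rw [Set.mem_singleton_iff] at ha; exact ha ▸ hxy⟩⟩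
      obtain ⟨i₀, hi₀⟩ := hV PUnit.{u+1} _ _ x
        ⟨fun _ => trivial, fun _ _ => trivial, ⟨PUnit.unit⟩,
          fun _ _ => ⟨PUnit.unit, trivial, trivial⟩⟩ hconv hx
      exact hi₀ i₀ trivial
    · intro A s hA hlub hs
      by_contra hcon
      push_neg at hcon
      -- for every finite nonempty B ⊆ A there is z ∈ ub B with z ∉ V
      have key : ∀ B : Set P, B.Nonempty → B.Finite → B ⊆ A →
          ∃ z ∈ upperBounds B, z ∉ V := fun B h1 h2 h3 =>
        Set.not_subset.mp (hcon B h1 h2 h3)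
      set T := {q : Set P × P // q.1.Nonempty ∧ q.1.Finite ∧ q.1 ⊆ A ∧
          q.2 ∈ upperBounds q.1 ∧ q.2 ∉ V} with hT
      have hAne : A.Nonempty := by
        rcases Set.eq_empty_or_nonempty A with rfl | h
        · exact absurd hA hM.1
        · exact h
      obtain ⟨a₀, ha₀⟩ := hAne
      obtain ⟨z₀, hz₀, hz₀V⟩ := key {a₀} ⟨a₀, rfl⟩ (Set.finite_singleton _)
        (Set.singleton_subset_iff.mpr ha₀)
      have hTne : Nonempty T := ⟨⟨({a₀}, z₀), ⟨a₀, rfl⟩, Set.finite_singleton _,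
        Set.singleton_subset_iff.mpr ha₀, hz₀, hz₀V⟩⟩
      set r : T → T → Prop := fun q q' => q.1.1 ⊆ q'.1.1 with hr
      have hdir : IsDirNet r := by
        refine ⟨fun i => le_rfl, fun h1 h2 => h1.trans h2, hTne, ?_⟩
        intro i j
        obtain ⟨z, hz, hzV⟩ := key (i.1.1 ∪ j.1.1) (i.2.1.mono Set.subset_union_left)
          (i.2.2.1.union j.2.2.1) (Set.union_subset i.2.2.2.1 j.2.2.2.1)
        exact ⟨⟨(i.1.1 ∪ j.1.1, z), i.2.1.mono Set.subset_union_left,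
          i.2.2.1.union j.2.2.1, Set.union_subset i.2.2.2.1 j.2.2.2.1, hz, hzV⟩,
          Set.subset_union_left, Set.subset_union_right⟩
      have hconv : MConv M r (fun q : T => q.1.2) s := by
        refine ⟨A, s, hA, hlub, le_rfl, fun a ha => ?_⟩
        obtain ⟨z, hz, hzV⟩ := key {a} ⟨a, rfl⟩ (Set.finite_singleton _)
          (Set.singleton_subset_iff.mpr ha)
        refine ⟨⟨({a}, z), ⟨a, rfl⟩, Set.finite_singleton _,
          Set.singleton_subset_iff.mpr ha, hz, hzV⟩, fun i hi => ?_⟩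
        exact i.2.2.2.2.1 (hi rfl)
      obtain ⟨i₀, hi₀⟩ := hV T r _ s hdir hconv hs
      exact i₀.2.2.2.2.2 (hi₀ i₀ (hdir.refl i₀))
  · rintro ⟨hup, htm2⟩
    intro I r f x hdir hconv hx
    obtain ⟨A, s, hA, hlub, hxs, hev⟩ := hconv
    obtain ⟨B, hBne, hBfin, hBA, hBub⟩ := htm2 A s hA hlub (hup hxs hx)
    obtain ⟨i₀, hi₀⟩ := dir_finite hdir hBfin (fun b i => b ≤ f i)
      (fun b hb => hev b (hBA hb))
    exact ⟨i₀, fun i hi => hBub (fun b hb => hi₀ i hi b hb)⟩
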